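/- Let {v_i}_{i=1}^m ⊆ ℤ^n span a full-rank subgroup, equip (ℤ^n)* with the form (α,β) = Σ_i ⟨α,v_i⟩⟨β,v_i⟩, and let α ∈ (ℤ^n)* satisfy: ⟨α, v_i⟩ ≠ 0 for a single index i and ⟨α, v_k⟩ = 0 for k ≠ i, with the reflection ρ_α acting on {v_k} by ρ_{α*}(v_i) = −v_i and ρ_{α*}(v_k) = v_k for k ≠ i. Then for all β ∈ (ℤ^n)*, the functional ρ_α*(β) := β ∘ ρ_{α*} equals β − (2(β,α)/(α,α))·α. -/
import Mathlib


open Finset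

/-- The natural pairing of a functional `α ∈ (ℤ^n)*` (represented by its coordinate
vector) with `x ∈ ℤ^n`. -/
def pairZ {n : ℕ} (a x : Fin n → ℤ) : ℤ := ∑ j, a j * x j

/-- The bilinear form `(α,β) = Σ_i ⟨α,v_i⟩⟨β,v_i⟩` on `(ℤ^n)*`. -/
def formV {n m : ℕ} (v : Fin m → Fin n → ℤ) (a b : Fin n → ℤ) : ℤ :=
  ∑ i, pairZ a (v i) * pairZ b (v i)

lemma pairZ_linear {n : ℕ} (a : Fin n → ℤ) : ∃ f : (Fin n → ℤ) →ₗ[ℤ] ℤ, ∀ x, f x = pairZ a x := by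
  refine ⟨{ toFun := fun x => pairZ a x, map_add' := ?_, map_smul' := ?_ }, fun x => rfl⟩
  · intro x y; simp [pairZ, mul_add, Finset.sum_add_distrib]
  · intro c x; simp [pairZ, Finset.mul_sum]; ring_nf; simp [mul_comm, mul_left_comm]

lemma pairZ_neg {n : ℕ} (a x : Fin n → ℤ) : pairZ a (-x) = -pairZ a x := by
  simp [pairZ]

/-- Lemma 4.2 (type 1 case): if `α` pairs nontrivially with `v_i` only, and the
reflection `g` satisfies `g(v_i) = −v_i`, `g(v_k) = v_k` for `k ≠ i`, then for any
`β` the functional `β ∘ g` equals `β − (2(β,α)/(α,α))·α`. -/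
theorem stmt19 {n m : ℕ} (v : Fin m → Fin n → ℤ)
    (hv : Module.finrank ℤ (Submodule.span ℤ (Set.range v)) = n)
    (g : (Fin n → ℤ) →ₗ[ℤ] (Fin n → ℤ)) (i : Fin m)
    (hgi : g (v i) = -(v i)) (hgk : ∀ k, k ≠ i → g (v k) = v k)
    (a : Fin n → ℤ)
    (hai : pairZ a (v i) ≠ 0) (hak : ∀ k, k ≠ i → pairZ a (v k) = 0) :
    ∀ b x : Fin n → ℤ,
      (pairZ b (g x) : ℚ) =
        (pairZ b x : ℚ) - (2 * formV v b a : ℚ) / (formV v a a : ℚ) * (pairZ a x : ℚ) := by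
  intro b x
  obtain ⟨fa, hfa⟩ := pairZ_linear a
  obtain ⟨fb, hfb⟩ := pairZ_linear b
  have hAA : formV v a a = pairZ a (v i) * pairZ a (v i) :=
    Finset.sum_eq_single i (fun k _ hk => by rw [hak k hk]; ring)
      (fun h => absurd (Finset.mem_univ i) h)
  have hBA : formV v b a = pairZ b (v i) * pairZ a (v i) :=
    Finset.sum_eq_single i (fun k _ hk => by rw [hak k hk]; ring)
      (fun h => absurd (Finset.mem_univ i) h)
  set φ : (Fin n → ℤ) →ₗ[ℤ] ℤ :=
    (formV v a a) • (fb.comp g) - (formV v a a) • fb + (2 * formV v b a) • fa with hφ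
  have hφv : ∀ k, φ (v k) = 0 := by
    intro k
    by_cases hk : k = i
    · subst hk
      simp only [hφ, LinearMap.sub_apply, LinearMap.add_apply, LinearMap.smul_apply,
        LinearMap.comp_apply, hgi, smul_eq_mul, hfa, hfb]
      rw [pairZ_neg, hAA, hBA]; ring
    · simp only [hφ, LinearMap.sub_apply, LinearMap.add_apply, LinearMap.smul_apply,
        LinearMap.comp_apply, hgk k hk, smul_eq_mul, hfa, hfb, hak k hk]
      ring
  have hspan : Submodule.span ℤ (Set.range v) ≤ LinearMap.ker φ := by
    rw [Submodule.span_le]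
    rintro _ ⟨k, rfl⟩
    exact hφv k
  have hquot : Module.finrank ℤ ((Fin n → ℤ) ⧸ Submodule.span ℤ (Set.range v)) = 0 := by
    rw [Submodule.finrank_quotient, hv]
    simp [Module.finrank_fin_fun]
  have htor := Module.finrank_eq_zero_iff.mp hquot
  have hφx : φ x = 0 := by
    obtain ⟨c, hc, hcx⟩ := htor (Submodule.Quotient.mk x)
    rw [← Submodule.Quotient.mk_smul, Submodule.Quotient.mk_eq_zero] at hcx
    have := hspan hcx
    rw [LinearMap.mem_ker, map_smul, smul_eq_mul] at this
    exact (mul_eq_zero.mp this).resolve_left hc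
  have hint : formV v a a * pairZ b (g x) - formV v a a * pairZ b x
      + 2 * formV v b a * pairZ a x = 0 := by
    simpa [hφ, hfa, hfb] using hφx
  have hCne : ((formV v a a : ℤ) : ℚ) ≠ 0 := by
    rw [hAA]; push_cast; exact mul_ne_zero (by exact_mod_cast hai) (by exact_mod_cast hai)
  have hQ : ((formV v a a : ℤ) : ℚ) * pairZ b (g x) - (formV v a a : ℤ) * pairZ b x
      + 2 * (formV v b a : ℤ) * pairZ a x = 0 := by exact_mod_cast hint
  field_simp
  linarith [hQ]
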